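/- With the setup as above, for any R₁, ε₁ > 0 and any R' > R₁, there exist R₂ > R' and 0 < ε₂ < ε₁ such that β^{R₁}(α^{ε₁}(F_{≥0}ⁿ)) ⊆ β^{R₂}(α^{ε₂}(F_{≥0}ⁿ)). -/

import Mathlib

open Classical

/-- `Z_i = ⋃ {S ∈ 𝒮 : i ∉ S}`. -/
def Zset (n : ℕ) (𝒮 : Set (Set (Fin n))) (i : Fin n) : Set (Fin n) :=
  ⋃₀ {S ∈ 𝒮 | i ∉ S}

/-- `α^ε_i(z) = z_i + ε ∑_{j ∉ Z_i} z_j`. -/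
noncomputable def alphaMap (F : Subfield ℝ) (n : ℕ) (𝒮 : Set (Set (Fin n))) (ε : F)
    (z : Fin n → F) : Fin n → F :=
  fun i => z i + ε * ∑ j ∈ Finset.univ.filter (fun j => j ∉ Zset n 𝒮 i), z j

/-- `P_i = ⋃ {S ∈ 𝒮 : i ∈ E^≥_S}` where `E^≥_S = Sᶜ ∪ E^>_S`. -/
def Pset (n : ℕ) (𝒮 : Set (Set (Fin n))) (Egt : Set (Fin n) → Set (Fin n)) (i : Fin n) :
    Set (Fin n) :=
  ⋃₀ {S ∈ 𝒮 | i ∈ Sᶜ ∪ Egt S}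

/-- `β^R_i(y) = y_i - R ∑_{j ∉ P_i, P_j ≠ P_i} y_j`. -/
noncomputable def betaMap (F : Subfield ℝ) (n : ℕ) (𝒮 : Set (Set (Fin n)))
    (Egt : Set (Fin n) → Set (Fin n)) (R : F) (y : Fin n → F) : Fin n → F :=
  fun i => y i - R * ∑ j ∈ Finset.univ.filter
    (fun j => j ∉ Pset n 𝒮 Egt i ∧ Pset n 𝒮 Egt j ≠ Pset n 𝒮 Egt i), y j

/-- `U⁺ = ⋃_{S ∈ 𝒮} F_{>0}^S · 0^{Sᶜ}`. -/
def Uset (F : Subfield ℝ) (n : ℕ) (𝒮 : Set (Set (Fin n))) : Set (Fin n → F) :=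
  {x | ∃ S ∈ 𝒮, (∀ i ∈ S, 0 < x i) ∧ ∀ i ∉ S, x i = 0}

/-- `V⁺ = ⋃_{S ∈ 𝒮} 0^{E⁰_S} · F_{>0}^{E^>_S} · F^{E^*_S}` (zero off `S`, strictly
positive on `E^>_S`, arbitrary on `E^*_S`). -/
def Vset (F : Subfield ℝ) (n : ℕ) (𝒮 : Set (Set (Fin n)))
    (Egt : Set (Fin n) → Set (Fin n)) : Set (Fin n → F) :=
  {x | ∃ S ∈ 𝒮, (∀ i ∉ S, x i = 0) ∧ ∀ i ∈ Egt S, 0 < x i}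

set_option maxHeartbeats 1600000

def ordRel {n : ℕ} (𝒮 : Set (Set (Fin n))) (j i : Fin n) : Prop :=
  ∀ S ∈ 𝒮, j ∈ S → i ∈ S

lemma ordRel_refl {n : ℕ} (𝒮 : Set (Set (Fin n))) (i : Fin n) : ordRel 𝒮 i i :=
  fun _ _ h => h

lemma ordRel_trans {n : ℕ} {𝒮 : Set (Set (Fin n))} {k j i : Fin n}
    (h1 : ordRel 𝒮 k j) (h2 : ordRel 𝒮 j i) : ordRel 𝒮 k i :=
  fun S hS hk => h2 S hS (h1 S hS hk)

lemma notZset_iff {n : ℕ} (𝒮 : Set (Set (Fin n))) (i j : Fin n) :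
    j ∉ Zset n 𝒮 i ↔ ordRel 𝒮 j i := by
  unfold Zset ordRel
  simp only [Set.mem_sUnion, Set.mem_setOf_eq, not_exists]
  constructor
  · intro h S hS hj
    by_contra hi
    exact h S ⟨⟨hS, hi⟩, hj⟩
  · rintro h S ⟨⟨hS, hi⟩, hj⟩
    exact hi (h S hS hj)

lemma sUnion_mem_of_closed {α : Type*} {𝒱 : Set (Set α)} (hfin : 𝒱.Finite)
    (hne : 𝒱.Nonempty) (hcl : ∀ a ∈ 𝒱, ∀ b ∈ 𝒱, a ∪ b ∈ 𝒱) : ⋃₀ 𝒱 ∈ 𝒱 := by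
  have key : ∀ (t : Finset (Set α)) (ht : t.Nonempty), (∀ a ∈ t, a ∈ 𝒱) → t.sup id ∈ 𝒱 := by
    intro t ht
    induction ht using Finset.Nonempty.cons_induction with
    | singleton a => intro h; simpa using h a (by simp)
    | cons a s ha hs ih =>
        intro h
        rw [Finset.sup_cons]
        exact hcl a (h a (by simp)) (s.sup id)
          (ih (fun b hb => h b (Finset.mem_cons_of_mem hb)))
  have h1 : hfin.toFinset.sup id ∈ 𝒱 := by
    apply key _ (by simpa [Set.Finite.toFinset_nonempty] using hne)
    intro a ha; exact (Set.Finite.mem_toFinset hfin).mp ha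
  have h2 : hfin.toFinset.sup id = ⋃₀ 𝒱 := by
    rw [Finset.sup_id_eq_sSup, ← Set.sSup_eq_sUnion, Set.Finite.coe_toFinset]
  rwa [h2] at h1

section Pfacts
variable {n : ℕ} {𝒮 : Set (Set (Fin n))} {Egt : Set (Fin n) → Set (Fin n)}

lemma Pset_max {i : Fin n} {S : Set (Fin n)} (hS : S ∈ 𝒮) (hi : i ∈ Sᶜ ∪ Egt S) :
    S ⊆ Pset n 𝒮 Egt i :=
  Set.subset_sUnion_of_mem ⟨hS, hi⟩

lemma Pset_spec (hempty : ∅ ∈ 𝒮)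
    (hcup : ∀ S₁ ∈ 𝒮, ∀ S₂ ∈ 𝒮, S₁ ∪ S₂ ∈ 𝒮)
    (hRV1 : ∀ S₁ ∈ 𝒮, ∀ S₂ ∈ 𝒮,
      (S₁ ∪ S₂)ᶜ ∪ Egt (S₁ ∪ S₂) = (S₁ᶜ ∪ Egt S₁) ∩ (S₂ᶜ ∪ Egt S₂))
    (i : Fin n) :
    Pset n 𝒮 Egt i ∈ 𝒮 ∧ i ∈ (Pset n 𝒮 Egt i)ᶜ ∪ Egt (Pset n 𝒮 Egt i) := by
  have h : ⋃₀ {S ∈ 𝒮 | i ∈ Sᶜ ∪ Egt S} ∈ {S ∈ 𝒮 | i ∈ Sᶜ ∪ Egt S} := by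
    apply sUnion_mem_of_closed (Set.toFinite _)
    · exact ⟨∅, hempty, Or.inl (by simp)⟩
    · rintro a ⟨ha, hia⟩ b ⟨hb, hib⟩
      exact ⟨hcup a ha b hb, by rw [hRV1 a ha b hb]; exact ⟨hia, hib⟩⟩
  exact h

lemma Pset_mono (hempty : ∅ ∈ 𝒮)
    (hcup : ∀ S₁ ∈ 𝒮, ∀ S₂ ∈ 𝒮, S₁ ∪ S₂ ∈ 𝒮)
    (hRV1 : ∀ S₁ ∈ 𝒮, ∀ S₂ ∈ 𝒮,
      (S₁ ∪ S₂)ᶜ ∪ Egt (S₁ ∪ S₂) = (S₁ᶜ ∪ Egt S₁) ∩ (S₂ᶜ ∪ Egt S₂))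
    {i j : Fin n} (hj : j ∉ Pset n 𝒮 Egt i) :
    Pset n 𝒮 Egt i ⊆ Pset n 𝒮 Egt j :=
  Pset_max (Pset_spec hempty hcup hRV1 i).1 (Or.inl hj)

lemma Pset_ord {i j : Fin n} (hj : j ∉ Pset n 𝒮 Egt i) : ordRel 𝒮 j i := by
  intro S hS hjS
  by_contra hiS
  exact hj (Pset_max hS (Or.inl hiS) hjS)

end Pfacts
lemma lemW (F : Subfield ℝ) {n : ℕ} (𝒮 : Set (Set (Fin n))) (ε : F) (hε : 0 < ε)
    (hεn : ε * (n : F) ≤ 1/2) :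
    ∀ (N : ℕ) (W : Set (Fin n)),
      W.ncard ≤ N → (∀ j ∈ W, ∀ i, ordRel 𝒮 j i → i ∈ W) →
      ∃ w : Fin n → F,
        (∀ i, 0 ≤ w i) ∧ (∀ i, w i ≤ 1) ∧ (∀ i, i ∉ W → w i = 0) ∧
        (∀ i, i ∈ W → 1/3 ≤ w i) ∧
        (∀ i, w i + ε * ∑ j ∈ Finset.univ.filter (fun j => ordRel 𝒮 j i), w j
            = if i ∈ W then 1 else 0) := by
  intro N
  induction N with
  | zero =>
      intro W hcard hup
      have hW : W = ∅ := (Set.ncard_eq_zero (Set.toFinite W)).mp (Nat.le_zero.mp hcard)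
      subst hW
      exact ⟨0, by simp, by simp, by simp, by simp, by intro i; simp⟩
  | succ N ih =>
      intro W hcard hup
      have hex : ∀ j : Fin n, j ∈ W → {i | ordRel 𝒮 j i} ≠ W →
          ∃ w : Fin n → F,
            (∀ i, 0 ≤ w i) ∧ (∀ i, w i ≤ 1) ∧
            (∀ i, i ∉ {i | ordRel 𝒮 j i} → w i = 0) ∧
            (∀ i, i ∈ {i | ordRel 𝒮 j i} → 1/3 ≤ w i) ∧
            (∀ i, w i + ε * ∑ j' ∈ Finset.univ.filter (fun j' => ordRel 𝒮 j' i), w j'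
                = if i ∈ {i | ordRel 𝒮 j i} then 1 else 0) := by
        intro j hjW hne
        have hsub : {i | ordRel 𝒮 j i} ⊆ W := fun i hi => hup j hjW i hi
        have hlt : ({i | ordRel 𝒮 j i}).ncard < W.ncard :=
          Set.ncard_lt_ncard (ssubset_of_subset_of_ne hsub hne) (Set.toFinite W)
        exact ih _ (by omega) (fun a ha i hai => ordRel_trans ha hai)
      classical
      have hex2 : ∀ j : Fin n, ∃ wj : Fin n → F,
          (j ∈ W ∧ {i | ordRel 𝒮 j i} ≠ W) →
            ((∀ i, 0 ≤ wj i) ∧ (∀ i, wj i ≤ 1) ∧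
            (∀ i, i ∉ {i | ordRel 𝒮 j i} → wj i = 0) ∧
            (∀ i, i ∈ {i | ordRel 𝒮 j i} → 1/3 ≤ wj i) ∧
            (∀ i, wj i + ε * ∑ j' ∈ Finset.univ.filter (fun j' => ordRel 𝒮 j' i), wj j'
                = if i ∈ {i | ordRel 𝒮 j i} then 1 else 0)) := by
        intro j
        by_cases h : j ∈ W ∧ {i | ordRel 𝒮 j i} ≠ W
        · obtain ⟨wj, hwj⟩ := hex j h.1 h.2
          exact ⟨wj, fun _ => hwj⟩
        · exact ⟨0, fun h' => absurd h' h⟩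
      choose wf hwfraw using hex2
      set Df : Finset (Fin n) :=
        Finset.univ.filter (fun j => j ∈ W ∧ {i | ordRel 𝒮 j i} ≠ W) with hDf
      set Kf : Finset (Fin n) :=
        Finset.univ.filter (fun j => j ∈ W ∧ {i | ordRel 𝒮 j i} = W) with hKf
      clear_value Df Kf
      have hwfspec : ∀ j ∈ Df,
          (∀ i, 0 ≤ wf j i) ∧ (∀ i, wf j i ≤ 1) ∧
          (∀ i, ¬ ordRel 𝒮 j i → wf j i = 0) ∧
          (∀ i, ordRel 𝒮 j i → 1/3 ≤ wf j i) ∧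
          (∀ i, wf j i + ε * ∑ j' ∈ Finset.univ.filter (fun j' => ordRel 𝒮 j' i), wf j j'
              = if ordRel 𝒮 j i then 1 else 0) := by
        intro j hj
        have hj' : j ∈ W ∧ {i | ordRel 𝒮 j i} ≠ W := by
          simpa [hDf] using hj
        have hspec := hwfraw j hj'
        refine ⟨hspec.1, hspec.2.1, ?_, ?_, ?_⟩
        · intro i hi; exact hspec.2.2.1 i (by simpa [Set.mem_setOf_eq] using hi)
        · intro i hi; exact hspec.2.2.2.1 i (by simpa [Set.mem_setOf_eq] using hi)
        · intro i
          have := hspec.2.2.2.2 i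
          simpa [Set.mem_setOf_eq] using this
      have hDsubW : ∀ j ∈ Df, j ∈ W := by
        intro j hj; exact (by simpa [hDf] using hj : j ∈ W ∧ _).1
      set κ : F := (Kf.card : F) with hκ
      clear_value κ
      have hκ0 : 0 ≤ κ := by rw [hκ]; positivity
      set denom : F := 1 + ε * κ with hdenomdef
      clear_value denom
      have hεκ0 : 0 ≤ ε * κ := mul_nonneg (le_of_lt hε) hκ0
      have hd1 : (1:F) ≤ denom := by rw [hdenomdef]; linarith
      have hd0 : 0 < denom := by linarith
      have hdne : denom ≠ 0 := ne_of_gt hd0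
      have hKcard : κ ≤ (n : F) := by
        have h : Kf.card ≤ n := by
          simpa using Finset.card_le_card (Finset.subset_univ Kf)
        rw [hκ]; exact_mod_cast h
      have hDcard : ((Df.card : ℕ) : F) ≤ (n : F) := by
        have h : Df.card ≤ n := by
          simpa using Finset.card_le_card (Finset.subset_univ Df)
        exact_mod_cast h
      have hεκn : ε * κ ≤ ε * (n : F) := mul_le_mul_of_nonneg_left hKcard (le_of_lt hε)
      have hd32 : denom ≤ 3/2 := by rw [hdenomdef]; linarith
      obtain ⟨num, hnum⟩ : ∃ num : Fin n → F, ∀ i,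
          num i = (if i ∈ W then (1:F) else 0) - ε * ∑ j ∈ Df, wf j i :=
        ⟨_, fun _ => rfl⟩
      obtain ⟨w, hw⟩ : ∃ w : Fin n → F, ∀ i, w i = num i / denom := ⟨_, fun _ => rfl⟩
      have hsum0 : ∀ i, 0 ≤ ∑ j ∈ Df, wf j i :=
        fun i => Finset.sum_nonneg (fun j hj => ((hwfspec j hj).1 i))
      have hsumUb : ∀ i, ∑ j ∈ Df, wf j i ≤ ((Df.card : ℕ) : F) := by
        intro i
        calc ∑ j ∈ Df, wf j i ≤ ∑ _j ∈ Df, (1:F) :=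
              Finset.sum_le_sum (fun j hj => (hwfspec j hj).2.1 i)
          _ = ((Df.card : ℕ) : F) := by simp
      have hnum_ub : ∀ i, num i ≤ 1 := by
        intro i
        have h1 : 0 ≤ ε * ∑ j ∈ Df, wf j i := mul_nonneg (le_of_lt hε) (hsum0 i)
        have h2 : (if i ∈ W then (1:F) else 0) ≤ 1 := by split <;> norm_num
        rw [hnum]; linarith
      have hnum_lbW : ∀ i, i ∈ W → 1/2 ≤ num i := by
        intro i hi
        have h1 : ε * ∑ j ∈ Df, wf j i ≤ ε * ((Df.card : ℕ) : F) :=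
          mul_le_mul_of_nonneg_left (hsumUb i) (le_of_lt hε)
        have h2 : ε * ((Df.card : ℕ) : F) ≤ ε * (n : F) :=
          mul_le_mul_of_nonneg_left hDcard (le_of_lt hε)
        rw [hnum, if_pos hi]; linarith
      have hnum_zero : ∀ i, i ∉ W → num i = 0 := by
        intro i hi
        have hz : ∀ j ∈ Df, wf j i = 0 := by
          intro j hj
          apply (hwfspec j hj).2.2.1 i
          intro hord
          exact hi (hup j (hDsubW j hj) i hord)
        rw [hnum, if_neg hi, Finset.sum_congr rfl hz]
        simp
      refine ⟨w, ?_, ?_, ?_, ?_, ?_⟩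
      · -- nonneg
        intro i
        by_cases hi : i ∈ W
        · have := hnum_lbW i hi
          rw [hw]
          exact div_nonneg (by linarith) (le_of_lt hd0)
        · rw [hw, hnum_zero i hi]; simp
      · -- ≤ 1
        intro i
        rw [hw, div_le_one hd0]
        exact le_trans (hnum_ub i) hd1
      · intro i hi; rw [hw, hnum_zero i hi]; simp
      · -- ≥ 1/3 on W
        intro i hi
        rw [hw, le_div_iff₀ hd0]
        have h1 := hnum_lbW i hi
        linarith
      · -- the equation
        intro i
        have E1 : ∀ j ∈ Df,
            ε * ∑ j' ∈ Finset.univ.filter (fun j' => ordRel 𝒮 j' i), wf j j'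
              = (if ordRel 𝒮 j i then (1:F) else 0) - wf j i := by
          intro j hj
          have := (hwfspec j hj).2.2.2.2 i
          linarith
        have E2 : ∑ j ∈ Finset.univ.filter (fun j => ordRel 𝒮 j i),
              (if j ∈ W then (1:F) else 0)
            = κ * (if i ∈ W then (1:F) else 0)
              + ∑ j ∈ Df, (if ordRel 𝒮 j i then (1:F) else 0) := by
          have h1 : ∑ j ∈ Finset.univ.filter (fun j => ordRel 𝒮 j i),
                (if j ∈ W then (1:F) else 0)
              = ∑ j ∈ Finset.univ.filter (fun j => j ∈ W),
                (if ordRel 𝒮 j i then (1:F) else 0) := by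
            rw [Finset.sum_filter, Finset.sum_filter]
            apply Finset.sum_congr rfl
            intro j _
            by_cases h1 : ordRel 𝒮 j i <;> by_cases h2 : j ∈ W <;> simp [h1, h2]
          have h2 : ∑ j ∈ Finset.univ.filter (fun j => j ∈ W),
                (if ordRel 𝒮 j i then (1:F) else 0)
              = ∑ j ∈ (Finset.univ.filter (fun j => j ∈ W)).filter
                    (fun j => {i | ordRel 𝒮 j i} = W), (if ordRel 𝒮 j i then (1:F) else 0)
                + ∑ j ∈ (Finset.univ.filter (fun j => j ∈ W)).filter
                    (fun j => ¬ {i | ordRel 𝒮 j i} = W), (if ordRel 𝒮 j i then (1:F) else 0) :=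
            (Finset.sum_filter_add_sum_filter_not _ _ _).symm
          have hKf' : (Finset.univ.filter (fun j => j ∈ W)).filter
              (fun j => {i | ordRel 𝒮 j i} = W) = Kf := by
            rw [Finset.filter_filter, hKf]
          have hDf' : (Finset.univ.filter (fun j => j ∈ W)).filter
              (fun j => ¬ {i | ordRel 𝒮 j i} = W) = Df := by
            rw [Finset.filter_filter, hDf]
          have h3 : ∑ j ∈ Kf, (if ordRel 𝒮 j i then (1:F) else 0)
              = κ * (if i ∈ W then (1:F) else 0) := by
            have hterm : ∀ j ∈ Kf, (if ordRel 𝒮 j i then (1:F) else 0)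
                = (if i ∈ W then (1:F) else 0) := by
              intro j hj
              have hU : {i | ordRel 𝒮 j i} = W := (by simpa [hKf] using hj : _ ∧ _).2
              have hiff : ordRel 𝒮 j i ↔ i ∈ W := by
                rw [← hU]; exact Iff.rfl
              exact if_congr hiff rfl rfl
            rw [Finset.sum_congr rfl hterm, Finset.sum_const, nsmul_eq_mul, hκ]
          rw [h1, h2, hKf', hDf', h3]
        -- assemble
        have hSig : ∑ j ∈ Finset.univ.filter (fun j => ordRel 𝒮 j i), num j
            = (κ * (if i ∈ W then (1:F) else 0)
                + ∑ j ∈ Df, (if ordRel 𝒮 j i then (1:F) else 0))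
              - (∑ j ∈ Df, (if ordRel 𝒮 j i then (1:F) else 0) - ∑ j ∈ Df, wf j i) := by
          have hs1 : ∑ j ∈ Finset.univ.filter (fun j => ordRel 𝒮 j i), num j
              = ∑ j ∈ Finset.univ.filter (fun j => ordRel 𝒮 j i),
                  (if j ∈ W then (1:F) else 0)
                - ∑ j ∈ Finset.univ.filter (fun j => ordRel 𝒮 j i),
                    (ε * ∑ j' ∈ Df, wf j' j) := by
            rw [← Finset.sum_sub_distrib]
            exact Finset.sum_congr rfl (fun j _ => hnum j)
          have hs2 : ∑ j ∈ Finset.univ.filter (fun j => ordRel 𝒮 j i),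
                  (ε * ∑ j' ∈ Df, wf j' j)
              = ∑ j' ∈ Df, (ε * ∑ j ∈ Finset.univ.filter (fun j => ordRel 𝒮 j i), wf j' j) := by
            rw [← Finset.mul_sum, ← Finset.mul_sum, Finset.sum_comm]
          have hs3 : ∑ j' ∈ Df, (ε * ∑ j ∈ Finset.univ.filter (fun j => ordRel 𝒮 j i), wf j' j)
              = ∑ j' ∈ Df, ((if ordRel 𝒮 j' i then (1:F) else 0) - wf j' i) := by
            exact Finset.sum_congr rfl E1
          rw [hs1, hs2, hs3, E2, Finset.sum_sub_distrib]
        -- final algebra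
        have hwd : ∀ i', denom * w i' = num i' := by
          intro i'
          rw [hw i', mul_comm, div_mul_cancel₀ _ hdne]
        have hds : denom * ∑ j ∈ Finset.univ.filter (fun j => ordRel 𝒮 j i), w j
            = ∑ j ∈ Finset.univ.filter (fun j => ordRel 𝒮 j i), num j := by
          rw [Finset.mul_sum]
          exact Finset.sum_congr rfl (fun j _ => hwd j)
        apply mul_left_cancel₀ hdne
        calc denom * (w i + ε * ∑ j ∈ Finset.univ.filter (fun j => ordRel 𝒮 j i), w j)
            = denom * w i
              + ε * (denom * ∑ j ∈ Finset.univ.filter (fun j => ordRel 𝒮 j i), w j) := by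
              ring
          _ = num i + ε * ∑ j ∈ Finset.univ.filter (fun j => ordRel 𝒮 j i), num j := by
              rw [hwd i, hds]
          _ = denom * (if i ∈ W then 1 else 0) := by
              rw [hSig, hnum i, hdenomdef]; ring

/-- For any `R₁, ε₁ > 0` and any `R' > R₁`, there exist `R₂ > R'` and `0 < ε₂ < ε₁`
such that `β^{R₁}(α^{ε₁}(F_{≥0}ⁿ)) ⊆ β^{R₂}(α^{ε₂}(F_{≥0}ⁿ))`. -/
theorem stmt14 (F : Subfield ℝ) (n : ℕ) (𝒮 : Set (Set (Fin n)))
    (hempty : ∅ ∈ 𝒮) (huniv : Set.univ ∈ 𝒮)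
    (hcup : ∀ S₁ ∈ 𝒮, ∀ S₂ ∈ 𝒮, S₁ ∪ S₂ ∈ 𝒮)
    (hcap : ∀ S₁ ∈ 𝒮, ∀ S₂ ∈ 𝒮, S₁ ∩ S₂ ∈ 𝒮)
    (Egt Estar : Set (Fin n) → Set (Fin n))
    (hpart : ∀ S ∈ 𝒮, Egt S ∩ Estar S = ∅ ∧ Egt S ∪ Estar S = S)
    (hRV1 : ∀ S₁ ∈ 𝒮, ∀ S₂ ∈ 𝒮,
      (S₁ ∪ S₂)ᶜ ∪ Egt (S₁ ∪ S₂) = (S₁ᶜ ∪ Egt S₁) ∩ (S₂ᶜ ∪ Egt S₂))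
    (hRV2 : ∀ S₁ ∈ 𝒮, ∀ S₂ ∈ 𝒮, ¬ S₂ ⊆ S₁ → (Egt S₂ \ S₁).Nonempty)
    (R₁ ε₁ R' : F) (hR₁ : 0 < R₁) (hε₁ : 0 < ε₁) (hR' : R₁ < R') :
    ∃ R₂ ε₂ : F, R' < R₂ ∧ 0 < ε₂ ∧ ε₂ < ε₁ ∧
      betaMap F n 𝒮 Egt R₁ '' (alphaMap F n 𝒮 ε₁ '' {z : Fin n → F | ∀ i, 0 ≤ z i}) ⊆
        betaMap F n 𝒮 Egt R₂ '' (alphaMap F n 𝒮 ε₂ '' {z : Fin n → F | ∀ i, 0 ≤ z i}) := by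
  classical
  -- abbreviations
  set R₂ : F := R' + 1 with hR₂def
  have hR₂R' : R' < R₂ := by rw [hR₂def]; linarith
  have hR₂R₁ : R₁ < R₂ := by linarith
  have hR₂pos : 0 < R₂ := by linarith
  set M : F := (R₂ - R₁) * ∑ m ∈ Finset.range (n+1), R₂^m * ((1+ε₁) * (n:F)^(m+1))
    with hMdef
  have hnn : (0:F) ≤ (n:F) := by positivity
  have hM0 : 0 ≤ M := by
    rw [hMdef]
    apply mul_nonneg (by linarith)
    apply Finset.sum_nonneg
    intro m _
    positivity
  set ε₂ : F := min (ε₁/2) (min (1/(2*((n:F)+1))) (ε₁/(6*(M+1)*((n:F)+1)))) with hε₂def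
  have hMp : (0:F) < M + 1 := by linarith
  have hnp : (0:F) < (n:F) + 1 := by linarith
  have hε₂pos : 0 < ε₂ := by
    rw [hε₂def]
    apply lt_min (by linarith)
    apply lt_min (by positivity) (by positivity)
  have hε₂half : ε₂ ≤ ε₁/2 := min_le_left _ _
  have hε₂lt : ε₂ < ε₁ := by linarith
  have hε₂n : ε₂ * (n:F) ≤ 1/2 := by
    have h1 : ε₂ ≤ 1/(2*((n:F)+1)) := le_trans (min_le_right _ _) (min_le_left _ _)
    have h2 : ε₂ * (n:F) ≤ (1/(2*((n:F)+1))) * (n:F) :=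
      mul_le_mul_of_nonneg_right h1 hnn
    have h3 : (1/(2*((n:F)+1))) * (n:F) ≤ 1/2 := by
      rw [div_mul_eq_mul_div, div_le_div_iff₀ (by positivity) (by norm_num)]
      ring_nf
      nlinarith
    linarith
  have hkey : ε₂ * (M * (n:F)) ≤ (ε₁ - ε₂)/3 := by
    have h1 : ε₂ ≤ ε₁/(6*(M+1)*((n:F)+1)) :=
      le_trans (min_le_right _ _) (min_le_right _ _)
    have hMn : M * (n:F) ≤ (M+1)*((n:F)+1) := by nlinarith
    have h2 : ε₂ * (M * (n:F)) ≤ (ε₁/(6*(M+1)*((n:F)+1))) * ((M+1)*((n:F)+1)) :=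
      mul_le_mul h1 hMn (mul_nonneg hM0 hnn)
        (div_nonneg (le_of_lt hε₁) (by positivity))
    have h3 : (ε₁/(6*(M+1)*((n:F)+1))) * ((M+1)*((n:F)+1)) = ε₁/6 := by
      field_simp
    linarith
  clear_value ε₂
  clear hε₂def
  -- the solution family from lemW
  have hwex : ∀ k : Fin n, ∃ w : Fin n → F,
      (∀ i, 0 ≤ w i) ∧ (∀ i, w i ≤ 1) ∧ (∀ i, i ∉ {i | ordRel 𝒮 k i} → w i = 0) ∧
      (∀ i, i ∈ {i | ordRel 𝒮 k i} → 1/3 ≤ w i) ∧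
      (∀ i, w i + ε₂ * ∑ j ∈ Finset.univ.filter (fun j => ordRel 𝒮 j i), w j
          = if i ∈ {i | ordRel 𝒮 k i} then 1 else 0) := by
    intro k
    apply lemW F 𝒮 ε₂ hε₂pos hε₂n n
    · calc ({i | ordRel 𝒮 k i}).ncard
          ≤ (Set.univ : Set (Fin n)).ncard :=
            Set.ncard_le_ncard (Set.subset_univ _) (Set.toFinite _)
        _ = n := by simp [Set.ncard_univ]
    · exact fun a ha i hai => ordRel_trans ha hai
  choose wfam hwprop using hwex
  have hwf0 : ∀ k i, 0 ≤ wfam k i := fun k => (hwprop k).1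
  have hwfeq : ∀ k i, ε₂ * ∑ j ∈ Finset.univ.filter (fun j => ordRel 𝒮 j i), wfam k j
      = (if ordRel 𝒮 k i then (1:F) else 0) - wfam k i := by
    intro k i
    have h := (hwprop k).2.2.2.2 i
    simp only [Set.mem_setOf_eq] at h
    linarith
  have hwflb : ∀ k i, (1/3) * (if ordRel 𝒮 k i then (1:F) else 0) ≤ wfam k i := by
    intro k i
    by_cases h : ordRel 𝒮 k i
    · rw [if_pos h]
      have := (hwprop k).2.2.2.1 i h
      linarith
    · rw [if_neg h]
      have := hwf0 k i
      linarith
  have hwfub : ∀ k i, wfam k i ≤ (if ordRel 𝒮 k i then (1:F) else 0) := by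
    intro k i
    by_cases h : ordRel 𝒮 k i
    · rw [if_pos h]; exact (hwprop k).2.1 i
    · rw [if_neg h]
      rw [(hwprop k).2.2.1 i h]
  -- start of the image argument
  refine ⟨R₂, ε₂, hR₂R', hε₂pos, hε₂lt, ?_⟩
  rintro x ⟨y', ⟨z, hz, rfl⟩, rfl⟩
  simp only [Set.mem_setOf_eq] at hz
  -- notation
  obtain ⟨g, hg⟩ : ∃ g : Fin n → F, ∀ i,
      g i = ∑ j ∈ Finset.univ.filter (fun j => ordRel 𝒮 j i), z j := ⟨_, fun _ => rfl⟩
  have hfiltz : ∀ i : Fin n, Finset.univ.filter (fun j => j ∉ Zset n 𝒮 i)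
      = Finset.univ.filter (fun j => ordRel 𝒮 j i) :=
    fun i => Finset.filter_congr (fun j _ => notZset_iff 𝒮 i j)
  have halphaz : ∀ (ε : F) (u : Fin n → F) (i : Fin n), alphaMap F n 𝒮 ε u i
      = u i + ε * ∑ j ∈ Finset.univ.filter (fun j => ordRel 𝒮 j i), u j := by
    intro ε u i
    rw [alphaMap, hfiltz i]
  obtain ⟨y, hydef⟩ : ∃ y : Fin n → F, ∀ i, y i = z i + ε₁ * g i :=
    ⟨_, fun _ => rfl⟩
  have hyalpha : alphaMap F n 𝒮 ε₁ z = y := by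
    funext i
    rw [halphaz, hydef i, hg i]
  obtain ⟨Bop, hBop⟩ : ∃ B : (Fin n → F) → (Fin n → F), ∀ v i, B v i
      = ∑ j ∈ Finset.univ.filter
          (fun j => j ∉ Pset n 𝒮 Egt i ∧ Pset n 𝒮 Egt j ≠ Pset n 𝒮 Egt i), v j :=
    ⟨_, fun _ _ => rfl⟩
  have hbetaB : ∀ (R : F) (u : Fin n → F) (i : Fin n),
      betaMap F n 𝒮 Egt R u i = u i - R * Bop u i := by
    intro R u i
    rw [betaMap, hBop]
  -- facts about the Q relation
  have hQmem : ∀ i j : Fin n, j ∈ Finset.univ.filter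
      (fun j => j ∉ Pset n 𝒮 Egt i ∧ Pset n 𝒮 Egt j ≠ Pset n 𝒮 Egt i) →
      ordRel 𝒮 j i ∧ Pset n 𝒮 Egt i ⊂ Pset n 𝒮 Egt j := by
    intro i j hj
    rw [Finset.mem_filter] at hj
    obtain ⟨-, hj1, hj2⟩ := hj
    refine ⟨Pset_ord hj1, ?_⟩
    exact ssubset_of_subset_of_ne (Pset_mono hempty hcup hRV1 hj1) (fun h => hj2 h.symm)
  -- nilpotency
  have hnil : ∀ (m : ℕ) (v : Fin n → F) (i : Fin n),
      n < (Pset n 𝒮 Egt i).ncard + m → Bop^[m] v i = 0 := by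
    intro m
    induction m with
    | zero =>
        intro v i hi
        exfalso
        have h1 : (Pset n 𝒮 Egt i).ncard ≤ n := by
          calc (Pset n 𝒮 Egt i).ncard
              ≤ (Set.univ : Set (Fin n)).ncard :=
                Set.ncard_le_ncard (Set.subset_univ _) (Set.toFinite _)
            _ = n := by simp [Set.ncard_univ]
        omega
    | succ m ihm =>
        intro v i hi
        rw [Function.iterate_succ_apply', hBop]
        apply Finset.sum_eq_zero
        intro j hj
        have hss := (hQmem i j hj).2
        have hlt : (Pset n 𝒮 Egt i).ncard < (Pset n 𝒮 Egt j).ncard :=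
          Set.ncard_lt_ncard hss (Set.toFinite _)
        exact ihm v j (by omega)
  -- basic bounds
  have hgpos : ∀ i, 0 ≤ g i := by
    intro i
    rw [hg i]
    exact Finset.sum_nonneg (fun j _ => hz j)
  have hzleg : ∀ i, z i ≤ g i := by
    intro i
    rw [hg i]
    exact Finset.single_le_sum (f := z) (fun j _ => hz j)
      (by simp [Finset.mem_filter, ordRel_refl])
  -- counting lemma
  have hcount : ∀ (k i : Fin n) (s : Finset (Fin n)), (∀ j ∈ s, ordRel 𝒮 j i) →
      ∑ j ∈ s, (if ordRel 𝒮 k j then (1:F) else 0)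
        ≤ (n:F) * (if ordRel 𝒮 k i then (1:F) else 0) := by
    intro k i s hs
    by_cases h : ordRel 𝒮 k i
    · rw [if_pos h, mul_one]
      calc ∑ j ∈ s, (if ordRel 𝒮 k j then (1:F) else 0)
          ≤ ∑ _j ∈ s, (1:F) := by
            apply Finset.sum_le_sum
            intro j _
            split <;> norm_num
        _ = (s.card : F) := by simp
        _ ≤ (n:F) := by
            have : s.card ≤ n := by simpa using Finset.card_le_card (Finset.subset_univ s)
            exact_mod_cast this
    · rw [if_neg h, mul_zero]
      apply le_of_eq
      apply Finset.sum_eq_zero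
      intro j hj
      rw [if_neg]
      intro hkj
      exact h (ordRel_trans hkj (hs j hj))
  -- sum of g over down-related finsets
  have hgs : ∀ (i : Fin n) (s : Finset (Fin n)), (∀ j ∈ s, ordRel 𝒮 j i) →
      ∑ j ∈ s, g j ≤ (n:F) * g i := by
    intro i s hs
    have h1 : ∀ j, g j = ∑ k, z k * (if ordRel 𝒮 k j then (1:F) else 0) := by
      intro j
      rw [hg j, Finset.sum_filter]
      apply Finset.sum_congr rfl
      intro k _
      split <;> ring
    calc ∑ j ∈ s, g j = ∑ j ∈ s, ∑ k, z k * (if ordRel 𝒮 k j then (1:F) else 0) :=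
          Finset.sum_congr rfl (fun j _ => h1 j)
      _ = ∑ k, ∑ j ∈ s, z k * (if ordRel 𝒮 k j then (1:F) else 0) := Finset.sum_comm
      _ = ∑ k, z k * ∑ j ∈ s, (if ordRel 𝒮 k j then (1:F) else 0) := by
          apply Finset.sum_congr rfl
          intro k _
          rw [Finset.mul_sum]
      _ ≤ ∑ k, z k * ((n:F) * (if ordRel 𝒮 k i then (1:F) else 0)) := by
          apply Finset.sum_le_sum
          intro k _
          exact mul_le_mul_of_nonneg_left (hcount k i s hs) (hz k)
      _ = (n:F) * ∑ k, z k * (if ordRel 𝒮 k i then (1:F) else 0) := by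
          rw [Finset.mul_sum]
          apply Finset.sum_congr rfl
          intro k _
          ring
      _ = (n:F) * g i := by rw [← h1 i]
  -- B step bound
  have hQord : ∀ i : Fin n, ∀ j ∈ Finset.univ.filter
      (fun j => j ∉ Pset n 𝒮 Egt i ∧ Pset n 𝒮 Egt j ≠ Pset n 𝒮 Egt i),
      ordRel 𝒮 j i := fun i j hj => (hQmem i j hj).1
  have hBstep : ∀ (v : Fin n → F) (c : F), 0 ≤ c → (∀ i, 0 ≤ v i ∧ v i ≤ c * g i) →
      ∀ i, 0 ≤ Bop v i ∧ Bop v i ≤ (c * (n:F)) * g i := by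
    intro v c hc hv i
    rw [hBop]
    constructor
    · exact Finset.sum_nonneg (fun j _ => (hv j).1)
    · calc ∑ j ∈ Finset.univ.filter
            (fun j => j ∉ Pset n 𝒮 Egt i ∧ Pset n 𝒮 Egt j ≠ Pset n 𝒮 Egt i), v j
          ≤ ∑ j ∈ Finset.univ.filter
            (fun j => j ∉ Pset n 𝒮 Egt i ∧ Pset n 𝒮 Egt j ≠ Pset n 𝒮 Egt i), c * g j :=
            Finset.sum_le_sum (fun j _ => (hv j).2)
        _ = c * ∑ j ∈ Finset.univ.filter
            (fun j => j ∉ Pset n 𝒮 Egt i ∧ Pset n 𝒮 Egt j ≠ Pset n 𝒮 Egt i), g j := by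
            rw [Finset.mul_sum]
        _ ≤ c * ((n:F) * g i) :=
            mul_le_mul_of_nonneg_left (hgs i _ (hQord i)) hc
        _ = (c * (n:F)) * g i := by ring
  -- iterate bounds
  have hy0 : ∀ i, 0 ≤ y i ∧ y i ≤ (1+ε₁) * g i := by
    intro i
    rw [hydef i]
    constructor
    · have := hgpos i
      have := hz i
      nlinarith
    · have h1 := hzleg i
      have h2 := hgpos i
      nlinarith
  have hBiter : ∀ (m : ℕ) (i : Fin n), 0 ≤ (Bop^[m] y) i ∧
      (Bop^[m] y) i ≤ ((1+ε₁) * (n:F)^m) * g i := by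
    intro m
    induction m with
    | zero =>
        intro i
        simp only [Function.iterate_zero_apply, pow_zero, mul_one]
        exact hy0 i
    | succ m ihm =>
        intro i
        rw [Function.iterate_succ_apply']
        have h := hBstep (Bop^[m] y) ((1+ε₁) * (n:F)^m) (by positivity) ihm i
        refine ⟨h.1, ?_⟩
        calc Bop (Bop^[m] y) i ≤ (((1+ε₁) * (n:F)^m) * (n:F)) * g i := h.2
          _ = ((1+ε₁) * (n:F)^(m+1)) * g i := by ring
  -- definition of v
  obtain ⟨v, hvdef⟩ : ∃ v : Fin n → F, ∀ i,
      v i = (R₂ - R₁) * ∑ m ∈ Finset.range (n+1), R₂^m * (Bop^[m+1] y) i :=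
    ⟨_, fun _ => rfl⟩
  have hv0 : ∀ i, 0 ≤ v i := by
    intro i
    rw [hvdef i]
    apply mul_nonneg (by linarith)
    apply Finset.sum_nonneg
    intro m _
    exact mul_nonneg (by positivity) (hBiter (m+1) i).1
  have hvM : ∀ i, v i ≤ M * g i := by
    intro i
    rw [hvdef i, hMdef]
    have h1 : ∑ m ∈ Finset.range (n+1), R₂^m * (Bop^[m+1] y) i
        ≤ ∑ m ∈ Finset.range (n+1), R₂^m * ((1+ε₁) * (n:F)^(m+1)) * g i := by
      apply Finset.sum_le_sum
      intro m _
      calc R₂^m * (Bop^[m+1] y) i ≤ R₂^m * (((1+ε₁) * (n:F)^(m+1)) * g i) :=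
            mul_le_mul_of_nonneg_left (hBiter (m+1) i).2 (by positivity)
        _ = R₂^m * ((1+ε₁) * (n:F)^(m+1)) * g i := by ring
    have h2 : ∑ m ∈ Finset.range (n+1), R₂^m * ((1+ε₁) * (n:F)^(m+1)) * g i
        = (∑ m ∈ Finset.range (n+1), R₂^m * ((1+ε₁) * (n:F)^(m+1))) * g i := by
      rw [Finset.sum_mul]
    calc (R₂ - R₁) * ∑ m ∈ Finset.range (n+1), R₂^m * (Bop^[m+1] y) i
        ≤ (R₂ - R₁) * ((∑ m ∈ Finset.range (n+1), R₂^m * ((1+ε₁) * (n:F)^(m+1))) * g i) := by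
          apply mul_le_mul_of_nonneg_left _ (by linarith)
          rw [← h2]; exact h1
      _ = (R₂ - R₁) * (∑ m ∈ Finset.range (n+1), R₂^m * ((1+ε₁) * (n:F)^(m+1))) * g i := by
          ring
  -- beta equation : v - R₂ • B v = (R₂ - R₁) • B y
  have hBlin : ∀ i, Bop v i = (R₂ - R₁) * ∑ m ∈ Finset.range (n+1),
      R₂^m * (Bop^[m+1+1] y) i := by
    intro i
    rw [hBop]
    have h1 : ∀ j, v j = (R₂ - R₁) * ∑ m ∈ Finset.range (n+1), R₂^m * (Bop^[m+1] y) j :=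
      hvdef
    calc ∑ j ∈ Finset.univ.filter
          (fun j => j ∉ Pset n 𝒮 Egt i ∧ Pset n 𝒮 Egt j ≠ Pset n 𝒮 Egt i), v j
        = ∑ j ∈ Finset.univ.filter
          (fun j => j ∉ Pset n 𝒮 Egt i ∧ Pset n 𝒮 Egt j ≠ Pset n 𝒮 Egt i),
            (R₂ - R₁) * ∑ m ∈ Finset.range (n+1), R₂^m * (Bop^[m+1] y) j :=
          Finset.sum_congr rfl (fun j _ => h1 j)
      _ = (R₂ - R₁) * ∑ j ∈ Finset.univ.filter
          (fun j => j ∉ Pset n 𝒮 Egt i ∧ Pset n 𝒮 Egt j ≠ Pset n 𝒮 Egt i),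
            ∑ m ∈ Finset.range (n+1), R₂^m * (Bop^[m+1] y) j := by
          rw [Finset.mul_sum]
      _ = (R₂ - R₁) * ∑ m ∈ Finset.range (n+1), ∑ j ∈ Finset.univ.filter
          (fun j => j ∉ Pset n 𝒮 Egt i ∧ Pset n 𝒮 Egt j ≠ Pset n 𝒮 Egt i),
            R₂^m * (Bop^[m+1] y) j := by
          rw [Finset.sum_comm]
      _ = (R₂ - R₁) * ∑ m ∈ Finset.range (n+1), R₂^m * (Bop^[m+1+1] y) i := by
          congr 1
          apply Finset.sum_congr rfl
          intro m _
          rw [← Finset.mul_sum, Function.iterate_succ_apply' Bop (m+1) y, hBop]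
  have hbeta2 : ∀ i, v i - R₂ * Bop v i = (R₂ - R₁) * Bop y i := by
    intro i
    rw [hvdef i, hBlin i]
    have htel : ∑ m ∈ Finset.range (n+1),
        (R₂^m * (Bop^[m+1] y) i - R₂^(m+1) * (Bop^[(m+1)+1] y) i)
        = R₂^0 * (Bop^[0+1] y) i - R₂^(n+1) * (Bop^[(n+1)+1] y) i :=
      Finset.sum_range_sub' (fun m => R₂^m * (Bop^[m+1] y) i) (n+1)
    have hz2 : (Bop^[(n+1)+1] y) i = 0 := hnil ((n+1)+1) y i (by omega)
    have hexp : ∑ m ∈ Finset.range (n+1), R₂^(m+1) * (Bop^[(m+1)+1] y) i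
        = R₂ * ∑ m ∈ Finset.range (n+1), R₂^m * (Bop^[m+1+1] y) i := by
      rw [Finset.mul_sum]
      apply Finset.sum_congr rfl
      intro m _
      ring_nf
    have h5 : ∑ m ∈ Finset.range (n+1), R₂^m * (Bop^[m+1] y) i
        - R₂ * ∑ m ∈ Finset.range (n+1), R₂^m * (Bop^[m+2] y) i
        = Bop y i := by
      rw [← hexp, ← Finset.sum_sub_distrib]
      rw [htel, hz2]
      simp
    nlinarith [h5]
  -- indicator sum helper
  have hind : ∀ (i : Fin n) (u : Fin n → F),
      ∑ k, u k * (if ordRel 𝒮 k i then (1:F) else 0)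
        = ∑ k ∈ Finset.univ.filter (fun j => ordRel 𝒮 j i), u k := by
    intro i u
    rw [Finset.sum_filter]
    apply Finset.sum_congr rfl
    intro k _
    split <;> ring
  -- definition of w
  obtain ⟨w, hwdef⟩ : ∃ w : Fin n → F, ∀ i,
      w i = z i + (ε₁ - ε₂) * (∑ k, z k * wfam k i)
        + (v i - ε₂ * (∑ k, v k * wfam k i)) := ⟨_, fun _ => rfl⟩
  -- nonnegativity of w
  have hwpos : ∀ i, 0 ≤ w i := by
    intro i
    rw [hwdef i]
    have hA2' : ∑ k, z k * (if ordRel 𝒮 k i then (1:F) else 0) = g i := by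
      rw [hind i z, ← hg i]
    have hA1lb : (1/3) * g i ≤ ∑ k, z k * wfam k i := by
      have h2 : ∑ k, z k * ((1/3) * (if ordRel 𝒮 k i then (1:F) else 0))
          = (1/3) * ∑ k, z k * (if ordRel 𝒮 k i then (1:F) else 0) := by
        rw [Finset.mul_sum]
        exact Finset.sum_congr rfl (fun k _ => by ring)
      calc (1/3) * g i
          = ∑ k, z k * ((1/3) * (if ordRel 𝒮 k i then (1:F) else 0)) := by
            rw [h2, hA2']
        _ ≤ ∑ k, z k * wfam k i :=
            Finset.sum_le_sum (fun k _ => mul_le_mul_of_nonneg_left (hwflb k i) (hz k))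
    have hA3ub : ∑ k, v k * wfam k i ≤ M * ((n:F) * g i) := by
      calc ∑ k, v k * wfam k i
          ≤ ∑ k, v k * (if ordRel 𝒮 k i then (1:F) else 0) :=
            Finset.sum_le_sum (fun k _ => mul_le_mul_of_nonneg_left (hwfub k i) (hv0 k))
        _ = ∑ k ∈ Finset.univ.filter (fun j => ordRel 𝒮 j i), v k := hind i v
        _ ≤ ∑ k ∈ Finset.univ.filter (fun j => ordRel 𝒮 j i), M * g k :=
            Finset.sum_le_sum (fun k _ => hvM k)
        _ = M * ∑ k ∈ Finset.univ.filter (fun j => ordRel 𝒮 j i), g k :=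
            (Finset.mul_sum _ _ _).symm
        _ ≤ M * ((n:F) * g i) :=
            mul_le_mul_of_nonneg_left
              (hgs i _ (fun j hj => (Finset.mem_filter.mp hj).2)) hM0
    have hprod : 0 ≤ ((ε₁ - ε₂)/3 - ε₂ * (M * (n:F))) * g i :=
      mul_nonneg (by linarith) (hgpos i)
    have c1 : (ε₁ - ε₂) * ((1/3) * g i) ≤ (ε₁ - ε₂) * (∑ k, z k * wfam k i) :=
      mul_le_mul_of_nonneg_left hA1lb (by linarith)
    have c2 : ε₂ * (∑ k, v k * wfam k i) ≤ ε₂ * (M * ((n:F) * g i)) :=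
      mul_le_mul_of_nonneg_left hA3ub (le_of_lt hε₂pos)
    have hz' := hz i
    have hv' := hv0 i
    nlinarith [c1, c2, hprod]
  -- the alpha equation
  have halpha : alphaMap F n 𝒮 ε₂ w = fun i => y i + v i := by
    funext i
    rw [halphaz]
    have hswap : ∀ u : Fin n → F,
        ∑ j ∈ Finset.univ.filter (fun j => ordRel 𝒮 j i), (∑ k, u k * wfam k j)
          = ∑ k, u k * (∑ j ∈ Finset.univ.filter (fun j => ordRel 𝒮 j i), wfam k j) := by
      intro u
      rw [Finset.sum_comm]
      exact Finset.sum_congr rfl (fun k _ => (Finset.mul_sum _ _ _).symm)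
    have hsum : ∑ j ∈ Finset.univ.filter (fun j => ordRel 𝒮 j i), w j
        = (∑ j ∈ Finset.univ.filter (fun j => ordRel 𝒮 j i), z j)
          + (ε₁ - ε₂) * (∑ k, z k *
              (∑ j ∈ Finset.univ.filter (fun j => ordRel 𝒮 j i), wfam k j))
          + ((∑ j ∈ Finset.univ.filter (fun j => ordRel 𝒮 j i), v j)
             - ε₂ * (∑ k, v k *
               (∑ j ∈ Finset.univ.filter (fun j => ordRel 𝒮 j i), wfam k j))) := by
      calc ∑ j ∈ Finset.univ.filter (fun j => ordRel 𝒮 j i), w j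
          = ∑ j ∈ Finset.univ.filter (fun j => ordRel 𝒮 j i),
              (z j + (ε₁ - ε₂) * (∑ k, z k * wfam k j)
                + (v j - ε₂ * (∑ k, v k * wfam k j))) :=
            Finset.sum_congr rfl (fun j _ => hwdef j)
        _ = (∑ j ∈ Finset.univ.filter (fun j => ordRel 𝒮 j i), z j)
            + (∑ j ∈ Finset.univ.filter (fun j => ordRel 𝒮 j i),
                (ε₁ - ε₂) * (∑ k, z k * wfam k j))
            + ((∑ j ∈ Finset.univ.filter (fun j => ordRel 𝒮 j i), v j)
               - ∑ j ∈ Finset.univ.filter (fun j => ordRel 𝒮 j i),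
                   ε₂ * (∑ k, v k * wfam k j)) := by
            rw [Finset.sum_add_distrib, Finset.sum_add_distrib, Finset.sum_sub_distrib]
        _ = (∑ j ∈ Finset.univ.filter (fun j => ordRel 𝒮 j i), z j)
            + (ε₁ - ε₂) * (∑ j ∈ Finset.univ.filter (fun j => ordRel 𝒮 j i),
                (∑ k, z k * wfam k j))
            + ((∑ j ∈ Finset.univ.filter (fun j => ordRel 𝒮 j i), v j)
               - ε₂ * (∑ j ∈ Finset.univ.filter (fun j => ordRel 𝒮 j i),
                   (∑ k, v k * wfam k j))) := by
            rw [← Finset.mul_sum, ← Finset.mul_sum]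
        _ = _ := by rw [hswap z, hswap v]
    rw [hwdef i, hsum, hydef i]
    have hT2 : ε₂ * (∑ k, z k *
        (∑ j ∈ Finset.univ.filter (fun j => ordRel 𝒮 j i), wfam k j))
        = (∑ k, z k * (if ordRel 𝒮 k i then (1:F) else 0)) - ∑ k, z k * wfam k i := by
      rw [Finset.mul_sum, ← Finset.sum_sub_distrib]
      apply Finset.sum_congr rfl
      intro k _
      have h := hwfeq k i
      calc ε₂ * (z k * ∑ j ∈ Finset.univ.filter (fun j => ordRel 𝒮 j i), wfam k j)
          = z k * (ε₂ * ∑ j ∈ Finset.univ.filter (fun j => ordRel 𝒮 j i), wfam k j) := by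
            ring
        _ = z k * ((if ordRel 𝒮 k i then (1:F) else 0) - wfam k i) := by rw [h]
        _ = z k * (if ordRel 𝒮 k i then (1:F) else 0) - z k * wfam k i := by ring
    have hT3 : ε₂ * (∑ k, v k *
        (∑ j ∈ Finset.univ.filter (fun j => ordRel 𝒮 j i), wfam k j))
        = (∑ k, v k * (if ordRel 𝒮 k i then (1:F) else 0)) - ∑ k, v k * wfam k i := by
      rw [Finset.mul_sum, ← Finset.sum_sub_distrib]
      apply Finset.sum_congr rfl
      intro k _
      have h := hwfeq k i
      calc ε₂ * (v k * ∑ j ∈ Finset.univ.filter (fun j => ordRel 𝒮 j i), wfam k j)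
          = v k * (ε₂ * ∑ j ∈ Finset.univ.filter (fun j => ordRel 𝒮 j i), wfam k j) := by
            ring
        _ = v k * ((if ordRel 𝒮 k i then (1:F) else 0) - wfam k i) := by rw [h]
        _ = v k * (if ordRel 𝒮 k i then (1:F) else 0) - v k * wfam k i := by ring
    have hA2 : ∑ k, z k * (if ordRel 𝒮 k i then (1:F) else 0) = g i := by
      rw [hind i z, ← hg i]
    have hA4 : ∑ k, v k * (if ordRel 𝒮 k i then (1:F) else 0)
        = ∑ j ∈ Finset.univ.filter (fun j => ordRel 𝒮 j i), v j := hind i v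
    have hgg : ∑ j ∈ Finset.univ.filter (fun j => ordRel 𝒮 j i), z j = g i :=
      (hg i).symm
    linear_combination (ε₁ - ε₂) * hT2 + (-ε₂) * hT3 + (ε₁ - ε₂) * hA2
      + (-ε₂) * hA4 + ε₂ * hgg
  -- conclusion
  refine ⟨alphaMap F n 𝒮 ε₂ w, ⟨w, hwpos, rfl⟩, ?_⟩
  rw [hyalpha, halpha]
  funext i
  rw [hbetaB, hbetaB]
  have hBadd : Bop (fun j => y j + v j) i = Bop y i + Bop v i := by
    rw [hBop, hBop, hBop, ← Finset.sum_add_distrib]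
  rw [hBadd]
  linear_combination hbeta2 i
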